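/- If a polytope P with d vertices can be written as the image under a linear map π of a polytope Q with f facets, then f ≥ log₂ d. -/

import Mathlib

open Set

/-- `P` is a polytope: the convex hull of a finite set of points. -/
def IsPolytope {k : ℕ} (P : Set (Fin k → ℝ)) : Prop :=
  ∃ s : Finset (Fin k → ℝ), P = convexHull ℝ (s : Set (Fin k → ℝ))

/-- `F` is a face of `Q`: either `Q` itself or the set of maximizers
of some linear functional over `Q`. -/
def IsFaceOf {n : ℕ} (Q F : Set (Fin n → ℝ)) : Prop :=
  F = Q ∨ ∃ c : Fin n → ℝ, F = {x ∈ Q | ∀ y ∈ Q, ∑ i, c i * y i ≤ ∑ i, c i * x i}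

/-- A facet of `Q` is a nonempty proper face that is maximal among proper faces. -/
def IsFacetOf {n : ℕ} (Q F : Set (Fin n → ℝ)) : Prop :=
  IsFaceOf Q F ∧ F.Nonempty ∧ F ≠ Q ∧
    ∀ F' : Set (Fin n → ℝ), IsFaceOf Q F' → F ⊆ F' → F' = F ∨ F' = Q

open scoped Classical

namespace Goemans

variable {ι : Type*} [Fintype ι]

/-- dot product -/
def dot (a x : ι → ℝ) : ℝ := ∑ i, a i * x i

def sols (S : Finset ((ι → ℝ) × ℝ)) : Set (ι → ℝ) := {x | ∀ p ∈ S, dot p.1 x ≤ p.2}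

lemma dot_add (a b x : ι → ℝ) : dot (a + b) x = dot a x + dot b x := by
  simp [dot, add_mul, Finset.sum_add_distrib]

lemma dot_smul (c : ℝ) (a x : ι → ℝ) : dot (c • a) x = c * dot a x := by
  simp [dot, Finset.mul_sum, mul_assoc]

lemma dot_update (a x : ι → ℝ) (v : ι) (t : ℝ) :
    dot a (Function.update x v t) = dot a x - a v * x v + a v * t := by
  classical
  simp only [dot]
  rw [← Finset.sum_erase_add _ _ (Finset.mem_univ v),
    ← Finset.sum_erase_add _ (fun i => a i * x i) (Finset.mem_univ v)]
  simp only [Function.update_self]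
  have : ∀ i ∈ Finset.univ.erase v, a i * Function.update x v t i = a i * x i := by
    intro i hi
    rw [Function.update_of_ne (Finset.ne_of_mem_erase hi)]
  rw [Finset.sum_congr rfl this]
  ring

/-- Fourier–Motzkin elimination of variable `v`. -/
noncomputable def elim (v : ι) (S : Finset ((ι → ℝ) × ℝ)) : Finset ((ι → ℝ) × ℝ) :=
  (S.filter (fun p => p.1 v = 0)) ∪
    ((S ×ˢ S).filter (fun q => 0 < q.1.1 v ∧ q.2.1 v < 0)).image
      (fun q => ((-q.2.1 v) • q.1.1 + (q.1.1 v) • q.2.1,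
                 (-q.2.1 v) * q.1.2 + q.1.1 v * q.2.2))

lemma elim_coeff {v : ι} {S : Finset ((ι → ℝ) × ℝ)} {p} (hp : p ∈ elim v S) : p.1 v = 0 := by
  simp only [elim, Finset.mem_union, Finset.mem_filter, Finset.mem_image] at hp
  rcases hp with ⟨-, h⟩ | ⟨q, ⟨-, h1, h2⟩, rfl⟩
  · exact h
  · simp only [Pi.add_apply, Pi.smul_apply, smul_eq_mul]
    ring

lemma elim_coeff_preserve {v w : ι} {S : Finset ((ι → ℝ) × ℝ)}
    (h : ∀ p ∈ S, p.1 w = 0) : ∀ p ∈ elim v S, p.1 w = 0 := by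
  intro p hp
  simp only [elim, Finset.mem_union, Finset.mem_filter, Finset.mem_image,
    Finset.mem_product] at hp
  rcases hp with ⟨hS, -⟩ | ⟨q, ⟨⟨hq1, hq2⟩, -, -⟩, rfl⟩
  · exact h p hS
  · simp only [Pi.add_apply, Pi.smul_apply, smul_eq_mul, h _ hq1, h _ hq2]
    ring

lemma sols_elim {v : ι} {S : Finset ((ι → ℝ) × ℝ)} {x : ι → ℝ} :
    x ∈ sols (elim v S) ↔ ∃ t, Function.update x v t ∈ sols S := by
  constructor
  · intro hx
    set U := S.filter (fun p => 0 < p.1 v) with hU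
    set L := S.filter (fun p => p.1 v < 0) with hL
    -- candidate bounds
    have key : ∀ p ∈ U, ∀ q ∈ L,
        (q.2 - (dot q.1 x - q.1 v * x v)) / q.1 v ≤ (p.2 - (dot p.1 x - p.1 v * x v)) / p.1 v := by
      intro p hp q hq
      simp only [hU, hL, Finset.mem_filter] at hp hq
      obtain ⟨hpS, hpv⟩ := hp
      obtain ⟨hqS, hqv⟩ := hq
      have hcomb : dot ((-q.1 v) • p.1 + (p.1 v) • q.1) x ≤ (-q.1 v) * p.2 + p.1 v * q.2 := by
        refine hx ⟨(-q.1 v) • p.1 + (p.1 v) • q.1, (-q.1 v) * p.2 + p.1 v * q.2⟩ ?_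
        simp only [elim, Finset.mem_union, Finset.mem_image]
        right
        exact ⟨(p, q), by simp [Finset.mem_filter, Finset.mem_product, hpS, hqS, hpv, hqv], rfl⟩
      rw [dot_add, dot_smul, dot_smul] at hcomb
      rw [div_le_iff_of_neg hqv, div_mul_eq_mul_div, div_le_iff₀ hpv]
      nlinarith [hcomb]
    by_cases hUe : U.Nonempty
    · refine ⟨U.inf' hUe (fun p => (p.2 - (dot p.1 x - p.1 v * x v)) / p.1 v), ?_⟩
      intro p hpS
      rw [dot_update]
      rcases lt_trichotomy (p.1 v) 0 with hv | hv | hv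
      · have hmem : p ∈ L := by simp [hL, Finset.mem_filter, hpS, hv]
        have hle : (p.2 - (dot p.1 x - p.1 v * x v)) / p.1 v ≤
            U.inf' hUe (fun r => (r.2 - (dot r.1 x - r.1 v * x v)) / r.1 v) :=
          Finset.le_inf' hUe _ (fun q hq => key q hq p hmem)
        rw [div_le_iff_of_neg hv] at hle
        linarith
      · have : dot p.1 x ≤ p.2 := by
          refine hx p ?_
          simp only [elim, Finset.mem_union, Finset.mem_filter]
          exact Or.inl ⟨hpS, hv⟩
        rw [hv]; linarith
      · have hmem : p ∈ U := by simp [hU, Finset.mem_filter, hpS, hv]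
        have hle : U.inf' hUe (fun r => (r.2 - (dot r.1 x - r.1 v * x v)) / r.1 v) ≤
            (p.2 - (dot p.1 x - p.1 v * x v)) / p.1 v := Finset.inf'_le _ hmem
        rw [le_div_iff₀ hv] at hle
        linarith
    · by_cases hLe : L.Nonempty
      · refine ⟨L.sup' hLe (fun p => (p.2 - (dot p.1 x - p.1 v * x v)) / p.1 v), ?_⟩
        intro p hpS
        rw [dot_update]
        rcases lt_trichotomy (p.1 v) 0 with hv | hv | hv
        · have hmem : p ∈ L := by simp [hL, Finset.mem_filter, hpS, hv]
          have hle : (p.2 - (dot p.1 x - p.1 v * x v)) / p.1 v ≤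
              L.sup' hLe (fun r => (r.2 - (dot r.1 x - r.1 v * x v)) / r.1 v) :=
            Finset.le_sup' (fun r => (r.2 - (dot r.1 x - r.1 v * x v)) / r.1 v) hmem
          rw [div_le_iff_of_neg hv] at hle
          linarith
        · have : dot p.1 x ≤ p.2 := by
            refine hx p ?_
            simp only [elim, Finset.mem_union, Finset.mem_filter]
            exact Or.inl ⟨hpS, hv⟩
          rw [hv]; linarith
        · exact absurd ⟨p, by simp [hU, Finset.mem_filter, hpS, hv]⟩ hUe
      · refine ⟨x v, ?_⟩
        rw [Function.update_eq_self]
        intro p hpS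
        have hv : p.1 v = 0 := by
          rcases lt_trichotomy (p.1 v) 0 with hv | hv | hv
          · exact absurd ⟨p, by simp [hL, Finset.mem_filter, hpS, hv]⟩ hLe
          · exact hv
          · exact absurd ⟨p, by simp [hU, Finset.mem_filter, hpS, hv]⟩ hUe
        refine hx p ?_
        simp only [elim, Finset.mem_union, Finset.mem_filter]
        exact Or.inl ⟨hpS, hv⟩
  · rintro ⟨t, ht⟩
    intro p hp
    simp only [elim, Finset.mem_union, Finset.mem_filter, Finset.mem_image,
      Finset.mem_product] at hp
    rcases hp with ⟨hS, hv⟩ | ⟨q, ⟨⟨hq1, hq2⟩, hpos, hneg⟩, rfl⟩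
    · have := ht p hS
      rw [dot_update, hv] at this
      linarith
    · have h1 := ht _ hq1
      have h2 := ht _ hq2
      simp only
      rw [dot_add, dot_smul, dot_smul]
      have e1 : dot q.1.1 (Function.update x v t) = dot q.1.1 x - q.1.1 v * x v + q.1.1 v * t :=
        dot_update _ _ _ _
      have e2 : dot q.2.1 (Function.update x v t) = dot q.2.1 x - q.2.1 v * x v + q.2.1 v * t :=
        dot_update _ _ _ _
      nlinarith [h1, h2, hpos, hneg]


/-- eliminate a list of variables -/
noncomputable def elimList : List ι → Finset ((ι → ℝ) × ℝ) → Finset ((ι → ℝ) × ℝ)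
  | [], S => S
  | v :: L, S => elim v (elimList L S)

lemma elimList_coeff {L : List ι} {S : Finset ((ι → ℝ) × ℝ)} :
    ∀ v ∈ L, ∀ p ∈ elimList L S, p.1 v = 0 := by
  induction L with
  | nil => simp
  | cons w L ih =>
    intro v hv p hp
    rcases List.mem_cons.1 hv with rfl | hv
    · exact elim_coeff hp
    · exact elim_coeff_preserve (ih v hv) p hp

lemma sols_elimList {L : List ι} {S : Finset ((ι → ℝ) × ℝ)} {x : ι → ℝ} :
    x ∈ sols (elimList L S) ↔ ∃ y, (∀ w, w ∉ L → y w = x w) ∧ y ∈ sols S := by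
  induction L generalizing x with
  | nil =>
    constructor
    · exact fun hx => ⟨x, fun _ _ => rfl, hx⟩
    · rintro ⟨y, hy, hyS⟩
      have : y = x := funext fun w => hy w List.not_mem_nil
      rwa [this] at hyS
  | cons v L ih =>
    show x ∈ sols (elim v (elimList L S)) ↔ _
    rw [sols_elim]
    constructor
    · rintro ⟨t, ht⟩
      obtain ⟨y, hy, hyS⟩ := ih.1 ht
      refine ⟨y, fun w hw => ?_, hyS⟩
      have hwv : w ≠ v := fun h => hw (by subst h; exact List.mem_cons_self)
      have hwL : w ∉ L := fun h => hw (List.mem_cons_of_mem _ h)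
      rw [hy w hwL, Function.update_of_ne hwv]
    · rintro ⟨y, hy, hyS⟩
      refine ⟨y v, ih.2 ⟨y, fun w hw => ?_, hyS⟩⟩
      by_cases hwv : w = v
      · subst hwv; rw [Function.update_self]
      · rw [Function.update_of_ne hwv]
        exact hy w (fun h => (by rcases List.mem_cons.1 h with h' | h'
                                 exacts [hwv h', hw h']))

lemma mem_convexHull_range_iff {N : ℕ} {E : Type*} [AddCommGroup E] [Module ℝ E]
    (v : Fin N → E) (x : E) :
    x ∈ convexHull ℝ (Set.range v) ↔
      ∃ w : Fin N → ℝ, (∀ i, 0 ≤ w i) ∧ ∑ i, w i = 1 ∧ ∑ i, w i • v i = x := by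
  rw [convexHull_range_eq_exists_affineCombination]
  constructor
  · rintro ⟨t, w, hw0, hw1, rfl⟩
    refine ⟨fun i => if i ∈ t then w i else 0, fun i => ?_, ?_, ?_⟩
    · by_cases h : i ∈ t <;> simp [h, hw0 i]
    · rw [Finset.sum_ite_mem, Finset.univ_inter]; exact hw1
    · rw [Finset.affineCombination_eq_linear_combination t v w hw1]
      rw [← Finset.sum_subset (Finset.subset_univ t) (by intro i _ hi; simp [hi])]
      exact Finset.sum_congr rfl fun i hi => by simp [hi]
  · rintro ⟨w, hw0, hw1, rfl⟩
    exact ⟨Finset.univ, w, fun i _ => hw0 i, hw1,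
      by rw [Finset.affineCombination_eq_linear_combination _ _ _ hw1]⟩

lemma weyl {n : ℕ} (s : Finset (Fin n → ℝ)) :
    ∃ T : Finset ((Fin n → ℝ) × ℝ),
      convexHull ℝ (↑s : Set (Fin n → ℝ)) = sols T := by
  rcases s.eq_empty_or_nonempty with rfl | hne
  · refine ⟨{(0, -1)}, ?_⟩
    simp only [Finset.coe_empty, convexHull_empty]
    ext x
    simp [sols, dot]
  set N := s.card with hN
  have hNpos : 0 < N := Finset.card_pos.2 hne
  set e := s.equivFin with he
  set v : Fin N → (Fin n → ℝ) := fun i => ↑(e.symm i) with hv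
  have hrange : Set.range v = (↑s : Set (Fin n → ℝ)) := by
    ext y
    constructor
    · rintro ⟨i, rfl⟩; exact (e.symm i).2
    · intro hy; exact ⟨e ⟨y, hy⟩, by simp [hv]⟩
  -- the system over Fin N ⊕ Fin n
  set SA : Finset (((Fin N ⊕ Fin n) → ℝ) × ℝ) :=
    (Finset.univ : Finset (Fin N)).image
      (fun i => (fun w => if w = Sum.inl i then (-1:ℝ) else 0, (0:ℝ))) with hSA
  set SB : Finset (((Fin N ⊕ Fin n) → ℝ) × ℝ) :=
    {(Sum.elim (fun _ => (1:ℝ)) (fun _ => 0), 1),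
     (Sum.elim (fun _ => (-1:ℝ)) (fun _ => 0), -1)} with hSB
  set SC : Finset (((Fin N ⊕ Fin n) → ℝ) × ℝ) :=
    (Finset.univ : Finset (Fin n)).image
      (fun j => (Sum.elim (fun i => v i j) (fun w => if w = j then (-1:ℝ) else 0), (0:ℝ)))
      with hSC
  set SD : Finset (((Fin N ⊕ Fin n) → ℝ) × ℝ) :=
    (Finset.univ : Finset (Fin n)).image
      (fun j => (Sum.elim (fun i => -(v i j)) (fun w => if w = j then (1:ℝ) else 0), (0:ℝ)))
      with hSD
  set S₀ := SA ∪ SB ∪ SC ∪ SD with hS₀def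
  have dot1 : ∀ (i : Fin N) (z : (Fin N ⊕ Fin n) → ℝ),
      dot (fun w => if w = Sum.inl i then (-1:ℝ) else 0) z = - z (Sum.inl i) := by
    intro i z
    rw [dot, Finset.sum_eq_single (Sum.inl i)]
    · simp
    · intro b _ hb; simp [hb]
    · simp
  have dot2 : ∀ (c : ℝ) (z : (Fin N ⊕ Fin n) → ℝ),
      dot (Sum.elim (fun _ => c) (fun _ => 0)) z = c * ∑ i, z (Sum.inl i) := by
    intro c z
    rw [dot, Fintype.sum_sum_type]
    simp [Finset.mul_sum]
  have dot3 : ∀ (j : Fin n) (z : (Fin N ⊕ Fin n) → ℝ) (u : Fin N → ℝ) (r : ℝ),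
      dot (Sum.elim u (fun w => if w = j then r else 0)) z =
        (∑ i, u i * z (Sum.inl i)) + r * z (Sum.inr j) := by
    intro j z u r
    rw [dot, Fintype.sum_sum_type]
    congr 1
    rw [Finset.sum_eq_single j]
    · simp
    · intro b _ hb; simp [hb]
    · simp
  have memSA : ∀ i : Fin N,
      ((fun w => if w = Sum.inl i then (-1:ℝ) else 0, (0:ℝ))) ∈ S₀ := by
    intro i
    simp only [hS₀def, Finset.mem_union, hSA, Finset.mem_image]
    exact Or.inl (Or.inl (Or.inl ⟨i, Finset.mem_univ i, rfl⟩))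
  have memSB1 : ((Sum.elim (fun _ => (1:ℝ)) (fun _ => 0), (1:ℝ))) ∈ S₀ := by
    simp only [hS₀def, Finset.mem_union, hSB]
    exact Or.inl (Or.inl (Or.inr (by simp)))
  have memSB2 : ((Sum.elim (fun _ => (-1:ℝ)) (fun _ => 0), (-1:ℝ))) ∈ S₀ := by
    simp only [hS₀def, Finset.mem_union, hSB]
    exact Or.inl (Or.inl (Or.inr (by simp)))
  have memSC : ∀ j : Fin n,
      ((Sum.elim (fun i => v i j) (fun w => if w = j then (-1:ℝ) else 0), (0:ℝ))) ∈ S₀ := by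
    intro j
    simp only [hS₀def, Finset.mem_union, hSC, Finset.mem_image]
    exact Or.inl (Or.inr ⟨j, Finset.mem_univ j, rfl⟩)
  have memSD : ∀ j : Fin n,
      ((Sum.elim (fun i => -(v i j)) (fun w => if w = j then (1:ℝ) else 0), (0:ℝ))) ∈ S₀ := by
    intro j
    simp only [hS₀def, Finset.mem_union, hSD, Finset.mem_image]
    exact Or.inr ⟨j, Finset.mem_univ j, rfl⟩
  have hchar : ∀ z : (Fin N ⊕ Fin n) → ℝ, z ∈ sols S₀ ↔
      ((∀ i, 0 ≤ z (Sum.inl i)) ∧ (∑ i, z (Sum.inl i)) = 1 ∧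
        ∀ j, (∑ i, z (Sum.inl i) * v i j) = z (Sum.inr j)) := by
    intro z
    constructor
    · intro hz
      refine ⟨fun i => ?_, ?_, fun j => ?_⟩
      · have h := hz _ (memSA i)
        rw [dot1] at h
        simp only at h
        linarith
      · have h1 := hz _ memSB1
        have h2 := hz _ memSB2
        rw [dot2] at h1 h2
        simp only at h1 h2
        linarith
      · have h1 := hz _ (memSC j)
        have h2 := hz _ (memSD j)
        rw [dot3] at h1 h2
        simp only at h1 h2
        have : ∑ i, -(v i j) * z (Sum.inl i) = -∑ i, v i j * z (Sum.inl i) := by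
          rw [← Finset.sum_neg_distrib]
          exact Finset.sum_congr rfl fun i _ => by ring
        rw [this] at h2
        have : ∑ i, z (Sum.inl i) * v i j = ∑ i, v i j * z (Sum.inl i) :=
          Finset.sum_congr rfl fun i _ => mul_comm _ _
        rw [this]
        linarith
    · rintro ⟨h0, h1, h2⟩
      intro p hp
      simp only [hS₀def, Finset.mem_union, hSA, hSB, hSC, hSD, Finset.mem_image,
        Finset.mem_insert, Finset.mem_singleton] at hp
      rcases hp with (((⟨i, -, rfl⟩ | (rfl | rfl)) | ⟨j, -, rfl⟩) | ⟨j, -, rfl⟩)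
      · rw [dot1]; simp only
        linarith [h0 i]
      · rw [dot2]; simp only
        rw [h1]; norm_num
      · rw [dot2]; simp only
        rw [h1]; norm_num
      · rw [dot3]; simp only
        have : ∑ i, v i j * z (Sum.inl i) = z (Sum.inr j) := by
          rw [← h2 j]
          exact Finset.sum_congr rfl fun i _ => mul_comm _ _
        rw [this]; ring_nf
        exact le_refl _
      · rw [dot3]; simp only
        have : ∑ i, -(v i j) * z (Sum.inl i) = -z (Sum.inr j) := by
          rw [← h2 j, ← Finset.sum_neg_distrib]
          exact Finset.sum_congr rfl fun i _ => by ring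
        rw [this]; ring_nf
        exact le_refl _
  set Lall : List (Fin N ⊕ Fin n) := ((Finset.univ : Finset (Fin N)).toList).map Sum.inl
    with hLall
  have hinrL : ∀ j : Fin n, (Sum.inr j : Fin N ⊕ Fin n) ∉ Lall := by
    intro j hj
    simp only [hLall, List.mem_map] at hj
    obtain ⟨a, -, h⟩ := hj
    cases h
  have hinlL : ∀ i : Fin N, (Sum.inl i : Fin N ⊕ Fin n) ∈ Lall := by
    intro i
    simp only [hLall, List.mem_map]
    exact ⟨i, Finset.mem_toList.2 (Finset.mem_univ i), rfl⟩
  refine ⟨(elimList Lall S₀).image (fun p => (fun j => p.1 (Sum.inr j), p.2)), ?_⟩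
  ext x
  set z : (Fin N ⊕ Fin n) → ℝ := Sum.elim (fun _ => (0:ℝ)) x with hzdef
  have hdotz : ∀ p : ((Fin N ⊕ Fin n) → ℝ) × ℝ,
      dot p.1 z = dot (fun j => p.1 (Sum.inr j)) x := by
    intro p
    rw [dot, dot, Fintype.sum_sum_type]
    simp [hzdef]
  have step1 : x ∈ sols ((elimList Lall S₀).image (fun p => (fun j => p.1 (Sum.inr j), p.2)))
      ↔ z ∈ sols (elimList Lall S₀) := by
    constructor
    · intro h p hp
      have := h _ (Finset.mem_image_of_mem _ hp)
      rw [hdotz p]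
      exact this
    · intro h q hq
      obtain ⟨p, hp, rfl⟩ := Finset.mem_image.1 hq
      have := h p hp
      rwa [hdotz p] at this
  have step2 : z ∈ sols (elimList Lall S₀) ↔
      ∃ w : Fin N → ℝ, (∀ i, 0 ≤ w i) ∧ ∑ i, w i = 1 ∧ ∑ i, w i • v i = x := by
    rw [sols_elimList]
    constructor
    · rintro ⟨y, hy, hyS⟩
      obtain ⟨h0, h1, h2⟩ := (hchar y).1 hyS
      refine ⟨fun i => y (Sum.inl i), h0, h1, ?_⟩
      funext j
      rw [Finset.sum_apply]
      simp only [Pi.smul_apply, smul_eq_mul]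
      rw [h2 j, hy _ (hinrL j)]
      simp [hzdef]
    · rintro ⟨w, h0, h1, h2⟩
      refine ⟨Sum.elim w x, fun u hu => ?_, ?_⟩
      · cases u with
        | inl i => exact absurd (hinlL i) hu
        | inr j => simp [hzdef]
      · refine (hchar _).2 ⟨h0, h1, fun j => ?_⟩
        have := congrFun h2 j
        rw [Finset.sum_apply] at this
        simpa using this
  have step3 : x ∈ convexHull ℝ (↑s : Set (Fin n → ℝ)) ↔
      ∃ w : Fin N → ℝ, (∀ i, 0 ≤ w i) ∧ ∑ i, w i = 1 ∧ ∑ i, w i • v i = x := by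
    rw [← hrange, mem_convexHull_range_iff]
  exact step3.trans (step2.symm.trans step1.symm)

lemma exists_irredundant {ι : Type*} [Fintype ι] (S : Finset ((ι → ℝ) × ℝ)) :
    ∃ T, T ⊆ S ∧ sols T = sols S ∧ ∀ p ∈ T, sols (T.erase p) ≠ sols T := by
  induction S using Finset.strongInduction with
  | _ S ih =>
    by_cases h : ∀ p ∈ S, sols (S.erase p) ≠ sols S
    · exact ⟨S, Finset.Subset.refl S, rfl, h⟩
    · push_neg at h
      obtain ⟨p, hp, hps⟩ := h
      obtain ⟨T, hT1, hT2, hT3⟩ := ih (S.erase p) (Finset.erase_ssubset hp)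
      exact ⟨T, hT1.trans (Finset.erase_subset _ _), hT2.trans hps, hT3⟩

lemma dot_right_add {ι : Type*} [Fintype ι] (a x y : ι → ℝ) :
    dot a (x + y) = dot a x + dot a y := by
  simp [dot, mul_add, Finset.sum_add_distrib]

lemma dot_right_smul {ι : Type*} [Fintype ι] (a : ι → ℝ) (c : ℝ) (x : ι → ℝ) :
    dot a (c • x) = c * dot a x := by
  simp [dot, Finset.mul_sum]
  exact Finset.sum_congr rfl fun i _ => by ring

lemma dot_right_sum {ι κ : Type*} [Fintype ι] (a : ι → ℝ) (t : Finset κ) (f : κ → ι → ℝ) :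
    dot a (∑ i ∈ t, f i) = ∑ i ∈ t, dot a (f i) := by
  simp only [dot]
  rw [Finset.sum_comm]
  refine Finset.sum_congr rfl fun i _ => ?_
  simp [Finset.mul_sum]

lemma dot_right_combo {ι : Type*} [Fintype ι] (a x y : ι → ℝ) (ε : ℝ) :
    dot a (y + ε • (y - x)) = dot a y + ε * (dot a y - dot a x) := by
  rw [dot_right_add, dot_right_smul]
  have : dot a (y - x) = dot a y - dot a x := by
    simp [dot, mul_sub, Finset.sum_sub_distrib]
  rw [this]

/-- the set of inequalities of `I` that are tight on all of `F` -/
noncomputable def eqs {n : ℕ} (I : Finset ((Fin n → ℝ) × ℝ)) (F : Set (Fin n → ℝ)) :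
    Finset ((Fin n → ℝ) × ℝ) :=
  I.filter (fun p => ∀ x ∈ F, dot p.1 x = p.2)

lemma eqs_anti {n : ℕ} (I : Finset ((Fin n → ℝ) × ℝ)) {F F' : Set (Fin n → ℝ)}
    (h : F ⊆ F') : eqs I F' ⊆ eqs I F := by
  intro p hp
  simp only [eqs, Finset.mem_filter] at hp ⊢
  exact ⟨hp.1, fun x hx => hp.2 x (h hx)⟩

lemma face_subset {n : ℕ} {Q F : Set (Fin n → ℝ)} (h : IsFaceOf Q F) : F ⊆ Q := by
  rcases h with rfl | ⟨c, rfl⟩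
  · exact Set.Subset.refl _
  · exact fun x hx => hx.1

lemma face_convex {n : ℕ} {Q F : Set (Fin n → ℝ)} (hQ : Convex ℝ Q) (h : IsFaceOf Q F) :
    Convex ℝ F := by
  rcases h with rfl | ⟨c, rfl⟩
  · exact hQ
  · intro x hx y hy a b ha hb hab
    refine ⟨hQ hx.1 hy.1 ha hb hab, fun w hw => ?_⟩
    have h1 := hx.2 w hw
    have h2 := hy.2 w hw
    have : ∑ i, c i * (a • x + b • y) i = a * (∑ i, c i * x i) + b * (∑ i, c i * y i) := by
      show dot c (a • x + b • y) = a * dot c x + b * dot c y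
      rw [dot_right_add, dot_right_smul, dot_right_smul]
    rw [this]
    have h3 : a * (∑ i, c i * w i) + b * (∑ i, c i * w i) = ∑ i, c i * w i := by
      rw [← add_mul, hab, one_mul]
    linarith [mul_le_mul_of_nonneg_left h1 ha, mul_le_mul_of_nonneg_left h2 hb]

lemma exists_relint {n : ℕ} (I : Finset ((Fin n → ℝ) × ℝ)) {F : Set (Fin n → ℝ)}
    (hFne : F.Nonempty) (hconv : Convex ℝ F) (hFQ : F ⊆ sols I) :
    ∃ y ∈ F, ∀ p ∈ I, p ∉ eqs I F → dot p.1 y < p.2 := by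
  classical
  set K := I.filter (fun p => ¬ ∀ x ∈ F, dot p.1 x = p.2) with hK
  have hwit : ∀ p ∈ K, ∃ w ∈ F, dot p.1 w < p.2 := by
    intro p hp
    simp only [hK, Finset.mem_filter] at hp
    push_neg at hp
    obtain ⟨hpI, x, hxF, hxne⟩ := hp
    exact ⟨x, hxF, lt_of_le_of_ne (hFQ hxF p hpI) hxne⟩
  choose w hwF hwlt using hwit
  rcases Finset.eq_empty_or_nonempty K with hKe | hKne
  · obtain ⟨y, hy⟩ := hFne
    refine ⟨y, hy, fun p hp hnp => ?_⟩
    exfalso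
    apply hnp
    simp only [eqs, Finset.mem_filter]
    refine ⟨hp, fun x hx => ?_⟩
    by_contra hne
    have : p ∈ K := by simp only [hK, Finset.mem_filter]; push_neg; exact ⟨hp, x, hx, hne⟩
    rw [hKe] at this
    exact absurd this (Finset.notMem_empty p)
  · set y := ∑ p ∈ K.attach, ((K.card : ℝ)⁻¹) • w p.1 p.2 with hy
    have hcard : (0:ℝ) < (K.card : ℝ) := by
      exact_mod_cast Finset.card_pos.2 hKne
    have hyF : y ∈ F := by
      refine hconv.sum_mem (fun i _ => by positivity) ?_ (fun i _ => hwF i.1 i.2)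
      rw [Finset.sum_const, Finset.card_attach, nsmul_eq_mul]
      field_simp
    refine ⟨y, hyF, fun p hp hnp => ?_⟩
    have hpK : p ∈ K := by
      simp only [hK, Finset.mem_filter]
      simp only [eqs, Finset.mem_filter] at hnp
      refine ⟨hp, fun hall => hnp ⟨hp, hall⟩⟩
    have hdot : dot p.1 y = ∑ q ∈ K.attach, ((K.card : ℝ)⁻¹) * dot p.1 (w q.1 q.2) := by
      rw [hy, dot_right_sum]
      exact Finset.sum_congr rfl fun q _ => dot_right_smul _ _ _
    rw [hdot]
    have hlt : ∑ q ∈ K.attach, ((K.card : ℝ)⁻¹) * dot p.1 (w q.1 q.2) <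
        ∑ _q ∈ K.attach, ((K.card : ℝ)⁻¹) * p.2 := by
      refine Finset.sum_lt_sum (fun q _ => ?_) ⟨⟨p, hpK⟩, Finset.mem_attach _ _, ?_⟩
      · have : dot p.1 (w q.1 q.2) ≤ p.2 := hFQ (hwF q.1 q.2) p hp
        have h0 : (0:ℝ) ≤ (K.card : ℝ)⁻¹ := by positivity
        nlinarith
      · have := hwlt p hpK
        have h0 : (0:ℝ) < (K.card : ℝ)⁻¹ := by positivity
        nlinarith
    calc _ < ∑ _q ∈ K.attach, ((K.card : ℝ)⁻¹) * p.2 := hlt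
      _ = p.2 := by
        rw [Finset.sum_const, Finset.card_attach, nsmul_eq_mul]
        field_simp

lemma dot_def {ι : Type*} [Fintype ι] (a x : ι → ℝ) : (∑ i, a i * x i) = dot a x := rfl

lemma face_eq_inter {n : ℕ} {Q F : Set (Fin n → ℝ)} {I : Finset ((Fin n → ℝ) × ℝ)}
    (hQI : Q = sols I) (hQconv : Convex ℝ Q) (hface : IsFaceOf Q F) (hFne : F.Nonempty) :
    F = {x ∈ Q | ∀ p ∈ eqs I F, dot p.1 x = p.2} := by
  classical
  rcases hface with rfl | ⟨c, hFc⟩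
  · ext x
    constructor
    · intro hx
      refine ⟨hx, fun p hp => ?_⟩
      simp only [eqs, Finset.mem_filter] at hp
      exact hp.2 x hx
    · exact fun hx => hx.1
  · have hFQ : F ⊆ Q := by rw [hFc]; exact fun x hx => hx.1
    have hFconv : Convex ℝ F := face_convex hQconv (Or.inr ⟨c, hFc⟩)
    obtain ⟨y, hyF, hy⟩ := exists_relint I hFne hFconv (by rw [← hQI]; exact hFQ)
    apply Set.Subset.antisymm
    · intro x hx
      refine ⟨hFQ hx, fun p hp => ?_⟩
      simp only [eqs, Finset.mem_filter] at hp
      exact hp.2 x hx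
    · intro x hx
      obtain ⟨hxQ, hxt⟩ := hx
      set K := I.filter (fun p => p ∉ eqs I F) with hKdef
      set ε := if h : K.Nonempty then
          min 1 (K.inf' h (fun p => (p.2 - dot p.1 y)/(1 + |dot p.1 y - dot p.1 x|))) else 1
        with hε
      have hterm : ∀ p ∈ K, 0 < (p.2 - dot p.1 y)/(1 + |dot p.1 y - dot p.1 x|) := by
        intro p hp
        simp only [hKdef, Finset.mem_filter] at hp
        have := hy p hp.1 hp.2
        have hd : (0:ℝ) < 1 + |dot p.1 y - dot p.1 x| := by positivity
        apply div_pos <;> [linarith; exact hd]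
      have hεpos : 0 < ε := by
        rw [hε]
        split_ifs with h
        · exact lt_min one_pos ((Finset.lt_inf'_iff h).2 (fun p hp => hterm p hp))
        · exact one_pos
      have hεle : ∀ p ∈ K, ε ≤ (p.2 - dot p.1 y)/(1 + |dot p.1 y - dot p.1 x|) := by
        intro p hp
        rw [hε, dif_pos ⟨p, hp⟩]
        exact le_trans (min_le_right _ _) (Finset.inf'_le _ hp)
      have hzQ : y + ε • (y - x) ∈ Q := by
        rw [hQI]
        intro p hpI
        rw [dot_right_combo]
        by_cases hp : p ∈ eqs I F
        · have h1 : dot p.1 y = p.2 := by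
            simp only [eqs, Finset.mem_filter] at hp
            exact hp.2 y hyF
          have h2 : dot p.1 x = p.2 := hxt p hp
          rw [h1, h2]
          simp
        · have hpK : p ∈ K := by simp only [hKdef, Finset.mem_filter]; exact ⟨hpI, hp⟩
          have hle := hεle p hpK
          have hd : (0:ℝ) < 1 + |dot p.1 y - dot p.1 x| := by positivity
          rw [le_div_iff₀ hd] at hle
          have h1 : ε * (dot p.1 y - dot p.1 x) ≤ ε * |dot p.1 y - dot p.1 x| :=
            mul_le_mul_of_nonneg_left (le_abs_self _) hεpos.le
          have h2 : ε * |dot p.1 y - dot p.1 x| ≤ ε * (1 + |dot p.1 y - dot p.1 x|) :=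
            mul_le_mul_of_nonneg_left (by linarith) hεpos.le
          linarith
      have hymax : ∀ w ∈ Q, dot c w ≤ dot c y := by
        rw [hFc] at hyF
        intro w hw
        rw [← dot_def, ← dot_def]
        exact hyF.2 w hw
      have hzle := hymax _ hzQ
      rw [dot_right_combo] at hzle
      have hxle := hymax x hxQ
      have hcx : dot c x = dot c y := by nlinarith
      rw [hFc]
      refine ⟨hxQ, fun w hw => ?_⟩
      rw [dot_def, dot_def, hcx]
      exact hymax w hw

lemma sols_convex {ι : Type*} [Fintype ι] (S : Finset ((ι → ℝ) × ℝ)) : Convex ℝ (sols S) := by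
  intro x hx y hy a b ha hb hab
  intro p hp
  have h : dot p.1 (a • x + b • y) = a * dot p.1 x + b * dot p.1 y := by
    rw [dot_right_add, dot_right_smul, dot_right_smul]
  rw [h]
  have h1 := hx p hp
  have h2 := hy p hp
  have h3 : a * p.2 + b * p.2 = p.2 := by rw [← add_mul, hab, one_mul]
  nlinarith [mul_le_mul_of_nonneg_left h1 ha, mul_le_mul_of_nonneg_left h2 hb]

lemma dot_right_combo' {ι : Type*} [Fintype ι] (a y w : ι → ℝ) (t : ℝ) :
    dot a (y + t • (w - y)) = dot a y + t * (dot a w - dot a y) := by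
  rw [dot_right_add, dot_right_smul]
  have : dot a (w - y) = dot a w - dot a y := by
    simp [dot, mul_sub, Finset.sum_sub_distrib]
  rw [this]

lemma eqs_Q_tight {n : ℕ} {Q : Set (Fin n → ℝ)} {I : Finset ((Fin n → ℝ) × ℝ)}
    (hQI : Q = sols I) {x : Fin n → ℝ} (hx : x ∈ Q) : ∀ p ∈ eqs I Q, dot p.1 x = p.2 := by
  intro p hp
  simp only [eqs, Finset.mem_filter] at hp
  exact hp.2 x hx

lemma facet_of_irredundant {n : ℕ} {Q : Set (Fin n → ℝ)} {I : Finset ((Fin n → ℝ) × ℝ)}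
    (hQI : Q = sols I) (hQne : Q.Nonempty)
    {j : (Fin n → ℝ) × ℝ} (hjI : j ∈ I) (hj : j ∉ eqs I Q)
    (hirr : ∃ yv, j.2 < dot j.1 yv ∧ ∀ p ∈ I, p ≠ j → dot p.1 yv ≤ p.2) :
    IsFacetOf Q {x ∈ Q | dot j.1 x = j.2} ∧
      eqs I {x ∈ Q | dot j.1 x = j.2} = insert j (eqs I Q) := by
  classical
  obtain ⟨yv, hyv1, hyv2⟩ := hirr
  have hQconv : Convex ℝ Q := by rw [hQI]; exact sols_convex I
  obtain ⟨y, hyQ, hy⟩ := exists_relint I hQne hQconv (by rw [← hQI])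
  have hjy : dot j.1 y < j.2 := hy j hjI hj
  set F := {x ∈ Q | dot j.1 x = j.2} with hFdef
  set t := (j.2 - dot j.1 y)/(dot j.1 yv - dot j.1 y) with ht
  have hden : 0 < dot j.1 yv - dot j.1 y := by linarith
  have ht0 : 0 < t := by apply div_pos <;> linarith
  have ht1 : t < 1 := by
    rw [ht, div_lt_one hden]
    linarith
  set z := y + t • (yv - y) with hz
  have hzj : dot j.1 z = j.2 := by
    rw [hz, dot_right_combo', ht]
    field_simp
    ring
  have hzval : ∀ p : (Fin n → ℝ) × ℝ, dot p.1 z = dot p.1 y + t * (dot p.1 yv - dot p.1 y) :=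
    fun p => dot_right_combo' _ _ _ _
  have hzQ : z ∈ Q := by
    rw [hQI]
    intro p hp
    by_cases hpj : p = j
    · subst hpj; rw [hzj]
    · have h2 := hyv2 p hp hpj
      have h1 : dot p.1 y ≤ p.2 := by
        have := hyQ
        rw [hQI] at this
        exact this p hp
      rw [hzval p]
      nlinarith
  have hzstrict : ∀ p ∈ I, p ≠ j → p ∉ eqs I Q → dot p.1 z < p.2 := by
    intro p hp hpj hpQ
    have h1 := hy p hp hpQ
    have h2 := hyv2 p hp hpj
    rw [hzval p]
    nlinarith
  have hzF : z ∈ F := ⟨hzQ, hzj⟩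
  have hFface : IsFaceOf Q F := by
    refine Or.inr ⟨j.1, ?_⟩
    ext x
    simp only [hFdef, Set.mem_setOf_eq, dot_def]
    constructor
    · rintro ⟨hxQ, hxj⟩
      refine ⟨hxQ, fun w hw => ?_⟩
      rw [hxj]
      rw [hQI] at hw
      exact hw j hjI
    · rintro ⟨hxQ, hmax⟩
      refine ⟨hxQ, ?_⟩
      have h1 := hmax z hzQ
      rw [hzj] at h1
      have h2 : dot j.1 x ≤ j.2 := by rw [hQI] at hxQ; exact hxQ j hjI
      linarith
  have hFne : F.Nonempty := ⟨z, hzF⟩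
  have hFQ : F ≠ Q := by
    intro h
    have : y ∈ F := h ▸ hyQ
    exact absurd this.2 (ne_of_lt hjy)
  have heqs : eqs I F = insert j (eqs I Q) := by
    apply Finset.Subset.antisymm
    · intro p hp
      have hpI : p ∈ I := (Finset.mem_filter.1 hp).1
      have hpz : dot p.1 z = p.2 := (Finset.mem_filter.1 hp).2 z hzF
      by_cases hpj : p = j
      · subst hpj; exact Finset.mem_insert_self _ _
      · by_cases hpQ : p ∈ eqs I Q
        · exact Finset.mem_insert_of_mem hpQ
        · exact absurd hpz (ne_of_lt (hzstrict p hpI hpj hpQ))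
    · intro p hp
      rcases Finset.mem_insert.1 hp with rfl | hpQ
      · simp only [eqs, Finset.mem_filter]
        exact ⟨hjI, fun x hx => hx.2⟩
      · exact eqs_anti I (fun x hx => hx.1) hpQ
  refine ⟨⟨hFface, hFne, hFQ, ?_⟩, heqs⟩
  intro F' hF' hFF'
  by_cases hF'Q : F' = Q
  · exact Or.inr hF'Q
  have hF'ne : F'.Nonempty := ⟨z, hFF' hzF⟩
  have hrepF' := face_eq_inter hQI hQconv hF' hF'ne
  have hrepF := face_eq_inter hQI hQconv hFface hFne
  have hsub : eqs I F' ⊆ insert j (eqs I Q) := heqs ▸ eqs_anti I hFF'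
  by_cases hjF' : j ∈ eqs I F'
  · left
    have : eqs I F' = insert j (eqs I Q) := by
      apply Finset.Subset.antisymm hsub
      intro p hp
      rcases Finset.mem_insert.1 hp with rfl | hpQ
      · exact hjF'
      · exact eqs_anti I (face_subset hF') hpQ
    rw [hrepF', hrepF, this, ← heqs]
  · exfalso
    apply hF'Q
    have heqsF' : eqs I F' = eqs I Q := by
      apply Finset.Subset.antisymm
      · intro p hp
        rcases Finset.mem_insert.1 (hsub hp) with rfl | hpQ
        · exact absurd hp hjF'
        · exact hpQ
      · exact eqs_anti I (face_subset hF')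
    rw [hrepF', heqsF']
    ext x
    exact ⟨fun hx => hx.1, fun hx => ⟨hx, eqs_Q_tight hQI hx⟩⟩

theorem faces_determined {n : ℕ} {Q : Set (Fin n → ℝ)} (hQpoly : IsPolytope Q)
    (hQne : Q.Nonempty) :
    ∃ FS : Finset (Set (Fin n → ℝ)),
      (↑FS = {F | IsFacetOf Q F}) ∧
      ∀ F G : Set (Fin n → ℝ), IsFaceOf Q F → F.Nonempty → IsFaceOf Q G → G.Nonempty →
        (∀ T ∈ FS, (F ⊆ T ↔ G ⊆ T)) → F = G := by
  classical
  obtain ⟨s, hs⟩ := hQpoly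
  obtain ⟨I₀, hI₀⟩ := weyl s
  obtain ⟨I, hIsub, hIsols, hirr⟩ := exists_irredundant I₀
  have hQI : Q = sols I := by rw [hs, hI₀, ← hIsols]
  have hQconv : Convex ℝ Q := by rw [hQI]; exact sols_convex I
  set Fj : ((Fin n → ℝ) × ℝ) → Set (Fin n → ℝ) := fun j => {x ∈ Q | dot j.1 x = j.2} with hFj
  have hfacets : ∀ j ∈ I, j ∉ eqs I Q →
      IsFacetOf Q (Fj j) ∧ eqs I (Fj j) = insert j (eqs I Q) := by
    intro j hj hjQ
    apply facet_of_irredundant hQI hQne hj hjQ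
    have hne := hirr j hj
    have hsub : sols I ⊆ sols (I.erase j) := fun x hx p hp => hx p (Finset.mem_of_mem_erase hp)
    have hnsub : ¬ sols (I.erase j) ⊆ sols I := fun h => hne (Set.Subset.antisymm h hsub)
    obtain ⟨yv, hyv1, hyv2⟩ := Set.not_subset.1 hnsub
    refine ⟨yv, ?_, fun p hp hpj => hyv1 p (Finset.mem_erase.2 ⟨hpj, hp⟩)⟩
    by_contra hle
    push_neg at hle
    apply hyv2
    intro p hp
    by_cases hpj : p = j
    · subst hpj; exact hle
    · exact hyv1 p (Finset.mem_erase.2 ⟨hpj, hp⟩)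
  set FS := (I.filter (fun j => j ∉ eqs I Q)).image Fj with hFS
  refine ⟨FS, ?_, ?_⟩
  · ext T
    simp only [hFS, Finset.coe_image, Set.mem_image, Finset.mem_coe, Finset.mem_filter,
      Set.mem_setOf_eq]
    constructor
    · rintro ⟨j, ⟨hjI, hjQ⟩, rfl⟩
      exact (hfacets j hjI hjQ).1
    · intro hT
      obtain ⟨hTface, hTne, hTQ, hTmax⟩ := hT
      have hrep := face_eq_inter hQI hQconv hTface hTne
      have hex : ∃ j ∈ eqs I T, j ∉ eqs I Q := by
        by_contra h
        push_neg at h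
        apply hTQ
        rw [hrep]
        ext x
        refine ⟨fun hx => hx.1, fun hx => ⟨hx, fun p hp => eqs_Q_tight hQI hx p (h p hp)⟩⟩
      obtain ⟨j, hjT, hjQ⟩ := hex
      have hjI : j ∈ I := (Finset.mem_filter.1 hjT).1
      have hTsub : T ⊆ Fj j := by
        intro x hx
        exact ⟨face_subset hTface hx, (Finset.mem_filter.1 hjT).2 x hx⟩
      obtain ⟨hfac, -⟩ := hfacets j hjI hjQ
      rcases hTmax (Fj j) hfac.1 hTsub with h | h
      · exact ⟨j, ⟨hjI, hjQ⟩, h⟩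
      · exact absurd h hfac.2.2.1
  · intro F G hF hFne hG hGne hiff
    have hrepF := face_eq_inter hQI hQconv hF hFne
    have hrepG := face_eq_inter hQI hQconv hG hGne
    have hsubiff : ∀ (H : Set (Fin n → ℝ)), IsFaceOf Q H → ∀ j ∈ I,
        ((H ⊆ Fj j) ↔ j ∈ eqs I H) := by
      intro H hH j hjI
      constructor
      · intro h
        exact Finset.mem_filter.2 ⟨hjI, fun x hx => (h hx).2⟩
      · intro h x hx
        exact ⟨face_subset hH hx, (Finset.mem_filter.1 h).2 x hx⟩
    have heq : eqs I F = eqs I G := by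
      ext p
      by_cases hpQ : p ∈ eqs I Q
      · constructor
        · intro _; exact eqs_anti I (face_subset hG) hpQ
        · intro _; exact eqs_anti I (face_subset hF) hpQ
      · constructor
        · intro hp
          have hpI : p ∈ I := (Finset.mem_filter.1 hp).1
          have hmem : Fj p ∈ FS := by
            rw [hFS]
            exact Finset.mem_image_of_mem _ (Finset.mem_filter.2 ⟨hpI, hpQ⟩)
          exact (hsubiff G hG p hpI).1 ((hiff _ hmem).1 ((hsubiff F hF p hpI).2 hp))
        · intro hp
          have hpI : p ∈ I := (Finset.mem_filter.1 hp).1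
          have hmem : Fj p ∈ FS := by
            rw [hFS]
            exact Finset.mem_image_of_mem _ (Finset.mem_filter.2 ⟨hpI, hpQ⟩)
          exact (hsubiff F hF p hpI).1 ((hiff _ hmem).2 ((hsubiff G hG p hpI).2 hp))
    rw [hrepF, hrepG, heq]

lemma fiber_face {n k : ℕ} {Q : Set (Fin n → ℝ)} {P : Set (Fin k → ℝ)}
    (sP : Finset (Fin k → ℝ)) (hP : P = convexHull ℝ (↑sP : Set (Fin k → ℝ)))
    (π : (Fin n → ℝ) →ₗ[ℝ] (Fin k → ℝ)) (hπ : P = ⇑π '' Q)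
    {p : Fin k → ℝ} (hp : p ∈ Set.extremePoints ℝ P) :
    IsFaceOf Q {x ∈ Q | π x = p} ∧ ({x ∈ Q | π x = p} : Set (Fin n → ℝ)).Nonempty := by
  classical
  have hpP : p ∈ P := hp.1
  have hQtoP : ∀ x ∈ Q, π x ∈ P := fun x hx => hπ ▸ Set.mem_image_of_mem _ hx
  obtain ⟨x₀, hx₀Q, hx₀⟩ : ∃ x₀ ∈ Q, π x₀ = p := by
    rw [hπ] at hpP
    obtain ⟨x₀, hx₀, h⟩ := hpP
    exact ⟨x₀, hx₀, h⟩
  refine ⟨?_, ⟨x₀, hx₀Q, hx₀⟩⟩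
  have hpsP : p ∈ sP := by
    rw [hP] at hp
    exact_mod_cast extremePoints_convexHull_subset hp
  set A : Set (Fin k → ℝ) := ↑(sP.erase p) with hA
  rcases (sP.erase p).eq_empty_or_nonempty with hAe | hAne
  · -- P = {p}; the fiber is all of Q
    left
    have hsP : sP = {p} := by
      apply Finset.Subset.antisymm
      · intro q hq
        by_contra hqp
        have : q ∈ sP.erase p := Finset.mem_erase.2 ⟨by simpa using hqp, hq⟩
        rw [hAe] at this
        exact absurd this (Finset.notMem_empty q)
      · intro q hq
        rw [Finset.mem_singleton] at hq
        rw [hq]; exact hpsP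
    have hPp : P = {p} := by
      rw [hP, hsP]
      simp
    ext x
    refine ⟨fun hx => hx.1, fun hx => ⟨hx, ?_⟩⟩
    have := hQtoP x hx
    rw [hPp] at this
    exact this
  · -- separate p from conv A
    have hpA : p ∉ convexHull ℝ A := by
      intro hmem
      have hAP : A ⊆ P := by
        rw [hP]
        exact fun q hq => subset_convexHull ℝ _ (by
          simp only [hA, Finset.coe_erase, Set.mem_diff] at hq
          exact hq.1)
      have h1 : p ∈ (convexHull ℝ A).extremePoints ℝ :=
        inter_extremePoints_subset_extremePoints_of_subset
          (convexHull_min hAP (hP ▸ convex_convexHull ℝ _)) ⟨hmem, hp⟩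
      have h2 : p ∈ A := extremePoints_convexHull_subset h1
      have h3 : p ∈ sP.erase p := by exact_mod_cast h2
      exact (Finset.mem_erase.1 h3).1 rfl
    have hclosed : IsClosed (convexHull ℝ A) :=
      Set.Finite.isClosed_convexHull ℝ (Finset.finite_toSet _)
    obtain ⟨ℓ, u, hu1, hu2⟩ :=
      geometric_hahn_banach_closed_point (convex_convexHull ℝ A) hclosed hpA
    -- maximizer characterization on P
    have hmax : ∀ w ∈ P, ℓ w ≤ ℓ p ∧ (ℓ w = ℓ p → w = p) := by
      intro w hw
      have hsPcoe : (↑sP : Set (Fin k → ℝ)) = insert p A := by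
        rw [hA, ← Finset.insert_erase hpsP]
        simp
      rw [hP, hsPcoe, convexHull_insert (by exact_mod_cast hAne)] at hw
      simp only [convexJoin_singleton_left, Set.mem_iUnion] at hw
      obtain ⟨z, hz, hwseg⟩ := hw
      obtain ⟨a, b, ha, hb, hab, hws⟩ := hwseg
      have hℓz : ℓ z < ℓ p := lt_trans (hu1 z hz) hu2
      have hℓw : ℓ w = a * ℓ p + b * ℓ z := by
        rw [← hws]
        simp [map_add, map_smul, smul_eq_mul]
      have hsplit : a * ℓ p + b * ℓ p = ℓ p := by rw [← add_mul, hab, one_mul]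
      have hble : b * ℓ z ≤ b * ℓ p := mul_le_mul_of_nonneg_left hℓz.le hb
      constructor
      · rw [hℓw]
        linarith
      · intro hweq
        rw [hℓw] at hweq
        have hmul : b * (ℓ p - ℓ z) = 0 := by nlinarith
        have hb0 : b = 0 := by
          rcases mul_eq_zero.1 hmul with h | h
          · exact h
          · exfalso; linarith
        have ha1 : a = 1 := by linarith
        rw [← hws, hb0, ha1]
        simp
    -- build the linear functional on the Q side
    set L : (Fin n → ℝ) →ₗ[ℝ] ℝ := ℓ.toLinearMap.comp π with hL
    set c : Fin n → ℝ := fun i => L (fun j => if i = j then 1 else 0) with hc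
    have hLx : ∀ x : Fin n → ℝ, (∑ i, c i * x i) = ℓ (π x) := by
      intro x
      have := LinearMap.pi_apply_eq_sum_univ L x
      rw [show L x = ℓ (π x) from rfl] at this
      rw [this]
      exact Finset.sum_congr rfl fun i _ => by rw [hc, smul_eq_mul, mul_comm]
    right
    refine ⟨c, ?_⟩
    ext x
    simp only [Set.mem_setOf_eq]
    constructor
    · rintro ⟨hxQ, hxp⟩
      refine ⟨hxQ, fun y hy => ?_⟩
      rw [hLx, hLx, hxp]
      exact (hmax _ (hQtoP y hy)).1
    · rintro ⟨hxQ, hmax'⟩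
      refine ⟨hxQ, ?_⟩
      have h1 := hmax' x₀ hx₀Q
      rw [hLx, hLx, hx₀] at h1
      have h2 := (hmax _ (hQtoP x hxQ)).1
      exact (hmax _ (hQtoP x hxQ)).2 (le_antisymm h2 h1)

theorem count_bound {n k : ℕ} (P : Set (Fin k → ℝ)) (Q : Set (Fin n → ℝ))
    (hQ : IsPolytope Q)
    (sP : Finset (Fin k → ℝ)) (hsP : P = convexHull ℝ (↑sP : Set (Fin k → ℝ)))
    (π : (Fin n → ℝ) →ₗ[ℝ] (Fin k → ℝ)) (hπ : P = ⇑π '' Q)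
    (hePne : (Set.extremePoints ℝ P).Nonempty) :
    (Set.extremePoints ℝ P).ncard ≤ 2 ^ ({F : Set (Fin n → ℝ) | IsFacetOf Q F}.ncard) := by
  classical
  have hQne : Q.Nonempty := by
    obtain ⟨p, hp⟩ := hePne
    have : p ∈ P := hp.1
    rw [hπ] at this
    obtain ⟨x, hx, -⟩ := this
    exact ⟨x, hx⟩
  obtain ⟨FS, hFSeq, hdet⟩ := faces_determined hQ hQne
  have hfcard : {F : Set (Fin n → ℝ) | IsFacetOf Q F}.ncard = FS.card := by
    rw [← hFSeq, Set.ncard_coe_finset]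
  set Φ : (Fin k → ℝ) → Finset (Set (Fin n → ℝ)) :=
    fun p => FS.filter (fun T => {x ∈ Q | π x = p} ⊆ T) with hΦ
  have hinj : Set.InjOn Φ (Set.extremePoints ℝ P) := by
    intro p hp q hq hpq
    obtain ⟨hfp, hfpne⟩ := fiber_face sP hsP π hπ hp
    obtain ⟨hfq, hfqne⟩ := fiber_face sP hsP π hπ hq
    have hsets : {x ∈ Q | π x = p} = {x ∈ Q | π x = q} := by
      refine hdet _ _ hfp hfpne hfq hfqne (fun T hT => ?_)
      constructor
      · intro h
        have h1 : T ∈ Φ p := Finset.mem_filter.2 ⟨hT, h⟩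
        rw [hpq] at h1
        exact (Finset.mem_filter.1 h1).2
      · intro h
        have h1 : T ∈ Φ q := Finset.mem_filter.2 ⟨hT, h⟩
        rw [← hpq] at h1
        exact (Finset.mem_filter.1 h1).2
    obtain ⟨x, hxQ, hxp⟩ := hfpne
    have hx2 : x ∈ {x ∈ Q | π x = q} := hsets ▸ ⟨hxQ, hxp⟩
    rw [← hxp, hx2.2]
  calc (Set.extremePoints ℝ P).ncard = (Φ '' Set.extremePoints ℝ P).ncard :=
        (Set.ncard_image_of_injOn hinj).symm
    _ ≤ (↑FS.powerset : Set (Finset (Set (Fin n → ℝ)))).ncard := by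
        refine Set.ncard_le_ncard ?_ (Finset.finite_toSet _)
        rintro T ⟨p, -, rfl⟩
        simp only [Finset.coe_powerset, Set.mem_preimage, Set.mem_powerset_iff,
          Finset.coe_subset]
        exact Finset.filter_subset _ _
    _ = 2 ^ FS.card := by rw [Set.ncard_coe_finset, Finset.card_powerset]
    _ = 2 ^ ({F : Set (Fin n → ℝ) | IsFacetOf Q F}.ncard) := by rw [hfcard]

end Goemans

open Goemans in
/-- **Goemans' lower bound**: if a polytope `P` with `d` vertices is the image
under a linear map `π` of a polytope `Q` with `f` facets, then `f ≥ log₂ d`. -/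
theorem stmt0 {n k : ℕ} (P : Set (Fin k → ℝ)) (Q : Set (Fin n → ℝ))
    (hP : IsPolytope P) (hQ : IsPolytope Q)
    (π : (Fin n → ℝ) →ₗ[ℝ] (Fin k → ℝ)) (hπ : P = ⇑π '' Q)
    (d f : ℕ)
    (hd : (Set.extremePoints ℝ P).ncard = d)
    (hf : {F : Set (Fin n → ℝ) | IsFacetOf Q F}.ncard = f) :
    Real.logb 2 d ≤ f := by
  classical
  by_cases hd1 : d = 0
  · subst hd1
    simp [Real.logb]
  have hdpos : (0:ℝ) < d := by
    have : 0 < d := Nat.pos_of_ne_zero hd1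
    exact_mod_cast this
  obtain ⟨sP, hsP⟩ := hP
  have hePne : (Set.extremePoints ℝ P).Nonempty :=
    Set.nonempty_of_ncard_ne_zero (by rw [hd]; exact hd1)
  have hcount : d ≤ 2 ^ f := by
    rw [← hd, ← hf]
    exact count_bound P Q hQ sP hsP π hπ hePne
  rw [Real.logb_le_iff_le_rpow one_lt_two hdpos, Real.rpow_natCast]
  calc (d:ℝ) ≤ ((2^f : ℕ) : ℝ) := by exact_mod_cast hcount
    _ = (2:ℝ)^f := by push_cast; ring
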